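/- Let S, Σ ∈ ℝ^{p×p} be real symmetric positive semidefinite matrices with tr(Σ) > 0, and let z = a + bi with b > 0. Then Im(tr(Σ (S − zI)⁻¹)) = b · tr(Σ ((S − aI)² + b² I)⁻¹) ≥ b · tr(Σ) / ((‖S‖ + |a|)² + b²) > 0, and consequently, for any n ≥ 1, |1 + (1/n) tr(Σ (S − zI)⁻¹)| ≥ (b / ((‖S‖ + |a|)² + b²)) · tr(Σ)/n. -/

import Mathlib

open Matrix Complex
open scoped Matrix.Norms.L2Operator MatrixOrder

lemma psd_trace_nonneg {p : ℕ} {A : Matrix (Fin p) (Fin p) ℝ} (hA : A.PosSemidef) :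
    0 ≤ A.trace := by
  rw [Matrix.trace]
  refine Finset.sum_nonneg fun i _ => ?_
  have := hA.dotProduct_mulVec_nonneg (Pi.single i 1)
  simpa [Matrix.mulVec_single, dotProduct, Pi.single_apply] using this

lemma psd_trace_mul_nonneg {p : ℕ} {A B : Matrix (Fin p) (Fin p) ℝ}
    (hA : A.PosSemidef) (hB : B.PosSemidef) : 0 ≤ (A * B).trace := by
  have h2 : (CFC.sqrt A * B * CFC.sqrt A).trace = (A * B).trace := by
    rw [Matrix.trace_mul_cycle, CFC.sqrt_mul_sqrt_self A hA.nonneg]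
  rw [← h2]
  refine psd_trace_nonneg ?_
  have := hB.mul_mul_conjTranspose_same (CFC.sqrt A)
  rwa [(CFC.sqrt_nonneg A).posSemidef.isHermitian.eq] at this

lemma dot_self_eq_norm_sq {p : ℕ} (v : Fin p → ℝ) :
    v ⬝ᵥ v = ‖(EuclideanSpace.equiv (Fin p) ℝ).symm v‖ ^ 2 := by
  rw [EuclideanSpace.norm_eq, Real.sq_sqrt (by positivity)]
  simp [dotProduct, Real.norm_eq_abs, sq_abs, sq]

lemma sq_le_smul_one_psd {p : ℕ} {A : Matrix (Fin p) (Fin p) ℝ} (hA : A.IsHermitian)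
    {c : ℝ} (hc : ‖A‖ ≤ c) : (c ^ 2 • 1 - A ^ 2 : Matrix (Fin p) (Fin p) ℝ).PosSemidef := by
  have hc0 : 0 ≤ c := le_trans (norm_nonneg A) hc
  refine Matrix.PosSemidef.of_dotProduct_mulVec_nonneg ?_ ?_
  · show _ = _
    rw [Matrix.conjTranspose_sub, Matrix.conjTranspose_smul, Matrix.conjTranspose_one,
      (hA.pow 2).eq, star_trivial]
  · intro x
    have hx : star x = x := star_trivial x
    rw [hx, Matrix.sub_mulVec, dotProduct_sub, Matrix.smul_mulVec,
      Matrix.one_mulVec, dotProduct_smul]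
    have hAt : Aᵀ = A := by
      rw [← Matrix.conjTranspose_eq_transpose_of_trivial, hA.eq]
    have h1 : x ⬝ᵥ (A ^ 2) *ᵥ x = (A *ᵥ x) ⬝ᵥ (A *ᵥ x) := by
      rw [pow_two, ← Matrix.mulVec_mulVec, Matrix.dotProduct_mulVec]
      congr 1
      rw [← Matrix.mulVec_transpose, hAt]
    rw [h1, dot_self_eq_norm_sq (A *ᵥ x), dot_self_eq_norm_sq x, smul_eq_mul, sub_nonneg,
      ← mul_pow]
    have := Matrix.l2_opNorm_mulVec A ((EuclideanSpace.equiv (Fin p) ℝ).symm x)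
    refine pow_le_pow_left₀ (norm_nonneg _) ?_ 2
    refine le_trans ?_ (mul_le_mul_of_nonneg_right hc (norm_nonneg _))
    simpa using this

lemma map_ofReal_smul_one {p : ℕ} (r : ℝ) :
    ((r • (1 : Matrix (Fin p) (Fin p) ℝ)).map Complex.ofReal) = (r : ℂ) • 1 := by
  ext i j
  by_cases h : i = j <;> simp [Matrix.map_apply, Matrix.one_apply, h]

lemma map_ofReal_mul {p : ℕ} (X Y : Matrix (Fin p) (Fin p) ℝ) :
    (X * Y).map Complex.ofReal = X.map Complex.ofReal * Y.map Complex.ofReal := by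
  ext i j
  simp [Matrix.mul_apply, Matrix.map_apply]

lemma map_ofReal_sub {p : ℕ} (X Y : Matrix (Fin p) (Fin p) ℝ) :
    (X - Y).map Complex.ofReal = X.map Complex.ofReal - Y.map Complex.ofReal := by
  ext i j
  simp [Matrix.map_apply]

lemma map_ofReal_add {p : ℕ} (X Y : Matrix (Fin p) (Fin p) ℝ) :
    (X + Y).map Complex.ofReal = X.map Complex.ofReal + Y.map Complex.ofReal := by
  ext i j
  simp [Matrix.map_apply]

lemma map_ofReal_one {p : ℕ} :
    (1 : Matrix (Fin p) (Fin p) ℝ).map Complex.ofReal = 1 := by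
  ext i j
  by_cases h : i = j <;> simp [Matrix.map_apply, Matrix.one_apply, h]

lemma trace_map_ofReal {p : ℕ} (X : Matrix (Fin p) (Fin p) ℝ) :
    Matrix.trace (X.map Complex.ofReal) = (X.trace : ℂ) := by
  simp [Matrix.trace, Matrix.diag, Matrix.map_apply]

theorem resolvent_trace_imaginary_part_lower_bound
    {p : ℕ} (S Sig : Matrix (Fin p) (Fin p) ℝ)
    (hS : S.PosSemidef) (hSig : Sig.PosSemidef) (htr : 0 < Sig.trace)
    (z : ℂ) (hz : 0 < z.im)
    (M : Matrix (Fin p) (Fin p) ℝ)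
    (hM : M = ((S - z.re • 1) ^ 2 + z.im ^ 2 • 1)⁻¹) :
    (Matrix.trace (Sig.map Complex.ofReal * (S.map Complex.ofReal - z • 1)⁻¹)).im
        = z.im * Matrix.trace (Sig * M) ∧
    z.im * Matrix.trace (Sig * M)
        ≥ z.im * Sig.trace / ((‖S‖ + |z.re|) ^ 2 + z.im ^ 2) ∧
    0 < z.im * Sig.trace / ((‖S‖ + |z.re|) ^ 2 + z.im ^ 2) ∧
    ∀ n : ℕ, 1 ≤ n →
      ‖(1 + (n : ℂ)⁻¹ *
            Matrix.trace (Sig.map Complex.ofReal * (S.map Complex.ofReal - z • 1)⁻¹))‖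
        ≥ (z.im / ((‖S‖ + |z.re|) ^ 2 + z.im ^ 2)) * (Sig.trace / (n : ℝ)) := by
  set a := z.re with ha
  set b := z.im with hb
  have hp : p ≠ 0 := by
    rintro rfl
    simp [Matrix.trace] at htr
  haveI : Nonempty (Fin p) := ⟨⟨0, Nat.pos_of_ne_zero hp⟩⟩
  set A : Matrix (Fin p) (Fin p) ℝ := S - a • 1 with hA
  set B : Matrix (Fin p) (Fin p) ℝ := A ^ 2 + b ^ 2 • 1 with hB
  have hAh : A.IsHermitian := by
    show _ = _
    rw [Matrix.conjTranspose_sub, hS.1.eq, Matrix.conjTranspose_smul, Matrix.conjTranspose_one,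
      star_trivial]
  have hA2 : (A ^ 2).PosSemidef := by
    rw [pow_two]
    nth_rewrite 1 [← hAh.eq]
    exact Matrix.posSemidef_conjTranspose_mul_self A
  have hb2 : (0:ℝ) < b ^ 2 := by positivity
  have hb21 : ((b ^ 2) • (1 : Matrix (Fin p) (Fin p) ℝ)).PosDef := by
    refine Matrix.PosDef.of_dotProduct_mulVec_pos ?_ ?_
    · show _ = _
      rw [Matrix.conjTranspose_smul, Matrix.conjTranspose_one, star_trivial]
    · intro x hx
      rw [Matrix.smul_mulVec, Matrix.one_mulVec, dotProduct_smul, smul_eq_mul]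
      exact mul_pos hb2 (Matrix.dotProduct_star_self_pos_iff.mpr hx)
  have hBpd : B.PosDef := Matrix.PosDef.posSemidef_add hA2 hb21
  have hdet : IsUnit B.det := (Matrix.isUnit_iff_isUnit_det B).1 hBpd.isUnit
  have hMB : M * B = 1 := by rw [hM]; exact Matrix.nonsing_inv_mul B hdet
  have hBM : B * M = 1 := by rw [hM]; exact Matrix.mul_nonsing_inv B hdet
  have hMpd : M.PosDef := by rw [hM]; exact hBpd.inv
  have hMpsd := hMpd.posSemidef
  set R := CFC.sqrt M with hR
  have hRR : R * R = M := CFC.sqrt_mul_sqrt_self M hMpsd.nonneg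
  have hRh : R.IsHermitian := (CFC.sqrt_nonneg M).posSemidef.isHermitian
  have hMR : M * R = R * M := by
    rw [← hRR, Matrix.mul_assoc]
  have hRB : R * B = B * R := by
    calc R * B = 1 * R * B := by rw [one_mul]
      _ = (B * M) * R * B := by rw [hBM]
      _ = B * (M * R) * B := by rw [Matrix.mul_assoc B M R]
      _ = B * (R * M) * B := by rw [hMR]
      _ = B * R * (M * B) := by simp only [Matrix.mul_assoc]
      _ = B * R := by rw [hMB, mul_one]
  have hRBR : R * B * R = 1 := by
    rw [hRB, Matrix.mul_assoc, hRR, hBM]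
  have hnormA : ‖A‖ ≤ ‖S‖ + |a| := by
    calc ‖A‖ ≤ ‖S‖ + ‖a • (1 : Matrix (Fin p) (Fin p) ℝ)‖ := norm_sub_le _ _
      _ = ‖S‖ + |a| := by rw [norm_smul, Real.norm_eq_abs, CStarRing.norm_one, mul_one]
  set K : ℝ := (‖S‖ + |a|) ^ 2 + b ^ 2 with hK
  have hKpos : (0:ℝ) < K := add_pos_of_nonneg_of_pos (by positivity) hb2
  have hK1B : (K • (1 : Matrix (Fin p) (Fin p) ℝ) - B).PosSemidef := by
    have heq : K • (1 : Matrix (Fin p) (Fin p) ℝ) - B = (‖S‖ + |a|) ^ 2 • 1 - A ^ 2 := by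
      rw [hK, hB, add_smul]
      module
    rw [heq]
    exact sq_le_smul_one_psd hAh hnormA
  have hKM1 : (K • M - 1 : Matrix (Fin p) (Fin p) ℝ).PosSemidef := by
    have heq : R * (K • (1 : Matrix (Fin p) (Fin p) ℝ) - B) * R = K • M - 1 := by
      rw [Matrix.mul_sub, Matrix.mul_smul, mul_one, Matrix.sub_mul, Matrix.smul_mul, hRR, hRBR]
    rw [← heq]
    have h := hK1B.mul_mul_conjTranspose_same R
    rwa [hRh.eq] at h
  have hMK : (M - K⁻¹ • 1 : Matrix (Fin p) (Fin p) ℝ).PosSemidef := by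
    have heq : (M - K⁻¹ • 1 : Matrix (Fin p) (Fin p) ℝ) = K⁻¹ • (K • M - 1) := by
      rw [smul_sub, smul_smul, inv_mul_cancel₀ hKpos.ne', one_smul]
    rw [heq]
    refine Matrix.PosSemidef.of_dotProduct_mulVec_nonneg ?_ ?_
    · show _ = _
      rw [Matrix.conjTranspose_smul, hKM1.1.eq, star_trivial]
    · intro x
      rw [Matrix.smul_mulVec, dotProduct_smul, smul_eq_mul]
      exact mul_nonneg (inv_nonneg.mpr hKpos.le) (hKM1.dotProduct_mulVec_nonneg x)
  have htr2 : Sig.trace / K ≤ (Sig * M).trace := by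
    have h0 : 0 ≤ (Sig * (M - K⁻¹ • 1)).trace := psd_trace_mul_nonneg hSig hMK
    rw [Matrix.mul_sub, Matrix.trace_sub, Matrix.mul_smul, Matrix.mul_one,
      Matrix.trace_smul, smul_eq_mul] at h0
    rw [div_eq_inv_mul]
    linarith
  -- complex resolvent identity
  set w : ℂ := (b : ℂ) * Complex.I with hw
  have hz1 : z • (1 : Matrix (Fin p) (Fin p) ℂ) = (a:ℂ) • 1 + w • 1 := by
    rw [← add_smul]
    congr 1
    exact (Complex.re_add_im z).symm
  have hAmap : A.map Complex.ofReal = S.map Complex.ofReal - (a:ℂ) • 1 := by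
    rw [hA, map_ofReal_sub, map_ofReal_smul_one]
  have hSC : S.map Complex.ofReal - z • 1 = A.map Complex.ofReal - w • 1 := by
    rw [hz1, hAmap]
    abel
  have hBmap : A.map Complex.ofReal * A.map Complex.ofReal + ((b:ℂ)^2) • 1
      = B.map Complex.ofReal := by
    rw [hB, map_ofReal_add, map_ofReal_smul_one, pow_two A, map_ofReal_mul]
    norm_cast
  have hinv : (S.map Complex.ofReal - z • 1)⁻¹
      = (A.map Complex.ofReal + w • 1) * M.map Complex.ofReal := by
    apply Matrix.inv_eq_right_inv
    rw [hSC, ← Matrix.mul_assoc]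
    have expand : (A.map Complex.ofReal - w • 1) * (A.map Complex.ofReal + w • 1)
        = A.map Complex.ofReal * A.map Complex.ofReal - (w * w) • 1 := by
      simp only [Matrix.sub_mul, Matrix.mul_add, Matrix.smul_mul, Matrix.mul_smul, one_mul,
        mul_one, smul_smul]
      module
    have hww : w * w = -((b:ℂ)^2) := by
      rw [hw, mul_mul_mul_comm, Complex.I_mul_I]
      ring
    rw [expand, hww, neg_smul, sub_neg_eq_add, hBmap, ← map_ofReal_mul, hBM, map_ofReal_one]
  have htrace : Matrix.trace (Sig.map Complex.ofReal * (S.map Complex.ofReal - z • 1)⁻¹)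
      = ((Sig * (A * M)).trace : ℂ) + w * ((Sig * M).trace : ℂ) := by
    rw [hinv, Matrix.add_mul, Matrix.smul_mul, one_mul, Matrix.mul_add, Matrix.mul_smul,
      Matrix.trace_add, Matrix.trace_smul, ← map_ofReal_mul A M, ← map_ofReal_mul Sig (A * M),
      ← map_ofReal_mul Sig M, trace_map_ofReal, trace_map_ofReal, smul_eq_mul]
  have hIm : (Matrix.trace (Sig.map Complex.ofReal *
      (S.map Complex.ofReal - z • 1)⁻¹)).im = b * (Sig * M).trace := by
    rw [htrace]
    simp [hw]
  refine ⟨hIm, ?_, ?_, ?_⟩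
  · rw [ge_iff_le, mul_div_assoc]
    exact mul_le_mul_of_nonneg_left htr2 hz.le
  · exact div_pos (mul_pos hz htr) hKpos
  · intro n hn
    have hn0 : (0:ℝ) < n := by exact_mod_cast hn
    set T := Matrix.trace (Sig.map Complex.ofReal * (S.map Complex.ofReal - z • 1)⁻¹) with hT
    have h2 : (1 + (n : ℂ)⁻¹ * T).im = (n:ℝ)⁻¹ * T.im := by
      rw [Complex.add_im, Complex.one_im, Complex.mul_im]
      simp
    have h3 : (b / K) * (Sig.trace / n) ≤ (n:ℝ)⁻¹ * (b * (Sig * M).trace) := by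
      calc (b / K) * (Sig.trace / n) = ((n:ℝ)⁻¹ * b) * (Sig.trace / K) := by ring
        _ ≤ ((n:ℝ)⁻¹ * b) * ((Sig * M).trace) := by
            exact mul_le_mul_of_nonneg_left htr2 (by positivity)
        _ = (n:ℝ)⁻¹ * (b * (Sig * M).trace) := by ring
    calc (b / K) * (Sig.trace / n) ≤ (n:ℝ)⁻¹ * (b * (Sig * M).trace) := h3
      _ = (1 + (n : ℂ)⁻¹ * T).im := by rw [h2, hIm]
      _ ≤ ‖1 + (n : ℂ)⁻¹ * T‖ := Complex.im_le_norm _
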